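/- Let R be a Noetherian local domain and let {J_n} be a discrete valued filtration, J_n = I(ν_1)_{⌈n a_1⌉} ∩ ⋯ ∩ I(ν_r)_{⌈n a_r⌉}, where ν_1, …, ν_r are discrete valuations nonnegative on R and a_i ∈ ℝ_{>0}. Suppose some ν_i has center m_R on R (i.e., m_{ν_i} ∩ R = m_R). Let c = max over those i with center m_R of ⌈a_i⌉. Then (J_n : m_R^∞) ∩ m_R^{cn} ⊆ J_n for all n ≥ 1; that is, {J_n} satisfies property A(c). -/

import Mathlib

/-- The valuation ideal `I(ν)_n = {f ∈ R : ν(f) ≥ n}` of a (discrete, additive) valuation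
`ν` on the fraction field which is nonnegative on `R`. -/
noncomputable def valIdeal {R K : Type*} [CommRing R] [Field K] [Algebra R K]
    (ν : AddValuation K (WithTop ℤ)) (hν : ∀ r : R, 0 ≤ ν (algebraMap R K r)) (n : ℤ) :
    Ideal R where
  carrier := {f : R | (n : WithTop ℤ) ≤ ν (algebraMap R K f)}
  zero_mem' := by
    simp only [Set.mem_setOf_eq, map_zero, AddValuation.map_zero]
    exact le_top
  add_mem' := by
    intro a b ha hb
    simp only [Set.mem_setOf_eq, map_add] at *
    exact le_trans (le_min ha hb) (ν.map_add _ _)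
  smul_mem' := by
    intro c f hf
    simp only [Set.mem_setOf_eq, smul_eq_mul, map_mul, AddValuation.map_mul] at *
    calc (n : WithTop ℤ) = 0 + n := (zero_add _).symm
    _ ≤ ν (algebraMap R K c) + ν (algebraMap R K f) := add_le_add (hν c) hf

lemma mem_valIdeal_iff {R K : Type*} [CommRing R] [Field K] [Algebra R K]
    (ν : AddValuation K (WithTop ℤ)) (hν : ∀ r : R, 0 ≤ ν (algebraMap R K r)) (n : ℤ)
    (f : R) : f ∈ valIdeal ν hν n ↔ (n : WithTop ℤ) ≤ ν (algebraMap R K f) := Iff.rfl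

lemma valIdeal_antitone {R K : Type*} [CommRing R] [Field K] [Algebra R K]
    (ν : AddValuation K (WithTop ℤ)) (hν : ∀ r : R, 0 ≤ ν (algebraMap R K r)) {m n : ℤ}
    (h : m ≤ n) : valIdeal ν hν n ≤ valIdeal ν hν m := by
  intro f hf
  rw [mem_valIdeal_iff] at *
  exact le_trans (by exact_mod_cast h) hf

lemma pow_le_valIdeal {R K : Type*} [CommRing R] [Field K] [Algebra R K]
    (ν : AddValuation K (WithTop ℤ)) (hν : ∀ r : R, 0 ≤ ν (algebraMap R K r)) (k : ℕ) :
    (valIdeal ν hν 1) ^ k ≤ valIdeal ν hν k := by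
  induction k with
  | zero => intro f _; simpa [mem_valIdeal_iff] using hν f
  | succ k ih =>
    rw [pow_succ]
    refine Ideal.mul_le.2 fun x hx y hy => ?_
    have hx' := ih hx
    rw [mem_valIdeal_iff] at *
    rw [map_mul, AddValuation.map_mul]
    push_cast
    exact add_le_add hx' hy

/-- The saturation `I : J^∞ = ⋃ₖ (I : Jᵏ)`. -/
noncomputable def sat {A : Type*} [CommRing A] (I J : Ideal A) : Ideal A :=
  ⨆ n : ℕ, Submodule.colon I (((J ^ n : Ideal A)) : Set A)

open Classical in
/-- let `R` be a Noetherian local domain and `{J_n}` a discrete valued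
filtration `J_n = I(ν₁)_{⌈n a₁⌉} ∩ ⋯ ∩ I(ν_r)_{⌈n a_r⌉}`, with some `ν_i` having center
`m_R` on `R`.  With `c` the maximum of `⌈a_i⌉` over the `i` whose center is `m_R`, one
has `(J_n : m_R^∞) ∩ m_R^{cn} ⊆ J_n` for all `n ≥ 1`; i.e. `{J_n}` satisfies `A(c)`. -/
theorem stmt15 {R K : Type*} [CommRing R] [IsDomain R] [IsNoetherianRing R] [IsLocalRing R]
    [Field K] [Algebra R K] [IsFractionRing R K]
    (r : ℕ) (ν : Fin r → AddValuation K (WithTop ℤ))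
    (hν : ∀ i, ∀ x : R, 0 ≤ (ν i) (algebraMap R K x))
    (a : Fin r → ℝ) (ha : ∀ i, 0 < a i)
    (hcenter : ∃ i, valIdeal (ν i) (hν i) 1 = IsLocalRing.maximalIdeal R)
    (J : ℕ → Ideal R)
    (hJ : ∀ n, J n = ⨅ i : Fin r, valIdeal (ν i) (hν i) ⌈(n : ℝ) * a i⌉)
    (c : ℕ)
    (hc : c = (Finset.univ.filter
        (fun i : Fin r => valIdeal (ν i) (hν i) 1 = IsLocalRing.maximalIdeal R)).sup
      (fun i => ⌈a i⌉₊)) :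
    ∀ n, 1 ≤ n →
      sat (J n) (IsLocalRing.maximalIdeal R) ⊓ (IsLocalRing.maximalIdeal R) ^ (c * n)
        ≤ J n := by
  intro n _ x hx
  obtain ⟨hx1, hx2⟩ := Submodule.mem_inf.1 hx
  rw [hJ, Ideal.mem_iInf]
  intro i
  by_cases hi : valIdeal (ν i) (hν i) 1 = IsLocalRing.maximalIdeal R
  · -- center is the maximal ideal: use x ∈ m ^ (c*n)
    have hle : ⌈(n : ℝ) * a i⌉ ≤ ((c * n : ℕ) : ℤ) := by
      rw [Int.ceil_le]
      push_cast
      have h2 : (⌈a i⌉₊ : ℝ) ≤ c := by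
        have h2' : ⌈a i⌉₊ ≤ c := by
          rw [hc]
          exact Finset.le_sup (f := fun j => ⌈a j⌉₊) (Finset.mem_filter.2 ⟨Finset.mem_univ i, hi⟩)
        exact_mod_cast h2'
      calc (n : ℝ) * a i ≤ n * c :=
            mul_le_mul_of_nonneg_left ((Nat.le_ceil _).trans h2) (Nat.cast_nonneg n)
        _ = c * n := mul_comm _ _
    refine valIdeal_antitone _ _ hle ?_
    refine pow_le_valIdeal (ν i) (hν i) (c * n) ?_
    rw [hi]
    exact hx2
  · -- center is not the maximal ideal: find x₀ ∈ m with ν i x₀ = 0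
    have hsub : valIdeal (ν i) (hν i) 1 ≤ IsLocalRing.maximalIdeal R := by
      intro f hf
      by_contra hfm
      have hu : IsUnit f := by
        by_contra h
        exact hfm (IsLocalRing.mem_maximalIdeal f |>.2 h)
      have h1 : ν i (algebraMap R K f) = 0 := by
        obtain ⟨g, hg⟩ := isUnit_iff_exists_inv.1 hu
        have hsum : ν i (algebraMap R K f) + ν i (algebraMap R K g) = 0 := by
          rw [← AddValuation.map_mul, ← map_mul, hg, map_one, AddValuation.map_one]
        have hle : ν i (algebraMap R K f) ≤ 0 :=
          calc ν i (algebraMap R K f)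
              ≤ ν i (algebraMap R K f) + ν i (algebraMap R K g) :=
                le_add_of_nonneg_right (hν i g)
            _ = 0 := hsum
        exact le_antisymm hle (hν i f)
      rw [mem_valIdeal_iff, h1] at hf
      exact absurd (by exact_mod_cast hf : (1 : ℤ) ≤ 0) (by norm_num)
    obtain ⟨x₀, hx₀m, hx₀ν⟩ : ∃ x₀ ∈ IsLocalRing.maximalIdeal R,
        x₀ ∉ valIdeal (ν i) (hν i) 1 := by
      by_contra h
      push_neg at h
      exact hi (le_antisymm hsub h)
    have h0 : ν i (algebraMap R K x₀) = 0 := by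
      have hlt : ν i (algebraMap R K x₀) < ((1 : ℤ) : WithTop ℤ) := by
        rw [mem_valIdeal_iff] at hx₀ν
        exact not_le.1 hx₀ν
      obtain ⟨m, hm⟩ := WithTop.ne_top_iff_exists.1 (ne_top_of_lt hlt)
      have hge := hν i x₀
      rw [← hm] at hlt hge ⊢
      have h1 : m < 1 := by exact_mod_cast hlt
      have h2 : (0 : ℤ) ≤ m := by exact_mod_cast hge
      exact_mod_cast (by omega : m = 0)
    -- extract k from saturation
    have hdir : Directed (· ≤ ·)
        (fun k : ℕ => Submodule.colon (J n) (((IsLocalRing.maximalIdeal R) ^ k : Ideal R) : Set R)) := by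
      intro k l
      refine ⟨max k l, ?_, ?_⟩ <;>
        exact Submodule.colon_mono le_rfl (SetLike.coe_subset_coe.2 (Ideal.pow_le_pow_right (by omega)))
    obtain ⟨k, hk⟩ := (Submodule.mem_iSup_of_directed _ hdir).1 hx1
    have hxy : x * x₀ ^ k ∈ J n := by
      have := Submodule.mem_colon.1 hk (x₀ ^ k) (Ideal.pow_mem_pow hx₀m k)
      simpa [smul_eq_mul] using this
    rw [hJ n, Ideal.mem_iInf] at hxy
    have hxi := hxy i
    rw [mem_valIdeal_iff] at hxi ⊢
    rw [map_mul, map_pow, AddValuation.map_mul, AddValuation.map_pow, h0] at hxi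
    simpa using hxi
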